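/- Equivalence with the conductivity minimization: assume there exists at least one q₀ ∈ ℝ^m with E q₀ = b. Then the infimum of ℒ(μ) = ℰ(μ) + ½ wᵀμ over the set {μ ∈ ℝ^m : μ_e ≥ 0 for all e} equals the supremum of bᵀu over {u ∈ ℝ^n : |(G u)_e| ≤ 1 for every e} (and hence equals the optimal value of the Beckmann problem). -/

import Mathlib

open Matrix BigOperators Filter

lemma ereal_le_of_forall_pos (a : EReal) (x : ℝ)
    (h : ∀ δ : ℝ, 0 < δ → a ≤ ((x + δ : ℝ) : EReal)) : a ≤ (x : EReal) := by
  by_contra hc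
  push_neg at hc
  obtain ⟨y, hy1, hy2⟩ := EReal.exists_between_coe_real hc
  have : a ≤ (y : EReal) := by
    have := h (y - x) (by exact_mod_cast sub_pos.2 (by exact_mod_cast hy1))
    simpa using this
  exact absurd (lt_of_le_of_lt this hy2) (lt_irrefl a)

lemma transpose_eq_w_smul_G {n m : ℕ}
    (E : Matrix (Fin n) (Fin m) ℝ) (w : Fin m → ℝ) (hw : ∀ e, 0 < w e)
    (G : Matrix (Fin m) (Fin n) ℝ) (hG : G = (Matrix.diagonal w)⁻¹ * Eᵀ)
    (u : Fin n → ℝ) (e : Fin m) : Eᵀ.mulVec u e = w e * G.mulVec u e := by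
  have hinv : (Matrix.diagonal w)⁻¹ = Matrix.diagonal (fun e => (w e)⁻¹) := by
    apply Matrix.inv_eq_right_inv
    rw [Matrix.diagonal_mul_diagonal]
    have : (fun i => w i * (w i)⁻¹) = fun _ => (1:ℝ) := by
      funext i; exact mul_inv_cancel₀ (hw i).ne'
    rw [this, Matrix.diagonal_one]
  rw [hG, hinv, ← Matrix.mulVec_mulVec, Matrix.mulVec_diagonal]
  rw [mul_inv_cancel_left₀ (hw e).ne']

lemma pairing_eq {n m : ℕ}
    (E : Matrix (Fin n) (Fin m) ℝ) (w : Fin m → ℝ) (hw : ∀ e, 0 < w e)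
    (G : Matrix (Fin m) (Fin n) ℝ) (hG : G = (Matrix.diagonal w)⁻¹ * Eᵀ)
    (u : Fin n → ℝ) (q : Fin m → ℝ) :
    u ⬝ᵥ E.mulVec q = ∑ e, q e * (w e * G.mulVec u e) := by
  rw [Matrix.dotProduct_mulVec, ← Matrix.mulVec_transpose, dotProduct_comm]
  refine Finset.sum_congr rfl fun e _ => ?_
  rw [transpose_eq_w_smul_G E w hw G hG]

lemma quadform_eq {n m : ℕ}
    (E : Matrix (Fin n) (Fin m) ℝ) (w : Fin m → ℝ) (hw : ∀ e, 0 < w e)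
    (G : Matrix (Fin m) (Fin n) ℝ) (hG : G = (Matrix.diagonal w)⁻¹ * Eᵀ)
    (μ : Fin m → ℝ) (u : Fin n → ℝ) :
    u ⬝ᵥ (E * Matrix.diagonal μ * G).mulVec u
      = ∑ e, μ e * (w e * (G.mulVec u e)^2) := by
  have h1 : (E * Matrix.diagonal μ * G).mulVec u
      = E.mulVec ((Matrix.diagonal μ).mulVec (G.mulVec u)) := by
    rw [Matrix.mulVec_mulVec, Matrix.mulVec_mulVec]
  rw [h1, pairing_eq E w hw G hG]
  refine Finset.sum_congr rfl fun e _ => ?_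
  rw [Matrix.mulVec_diagonal]
  ring

lemma young_term (qe we me t : ℝ) (hwe : 0 < we) (hme : 0 < me) :
    qe * (we * t) - (1/2) * (me * (we * t^2)) ≤ (1/2) * (we * qe^2 / me) := by
  rw [← mul_div_assoc, le_div_iff₀ hme]
  nlinarith [mul_nonneg hwe.le (sq_nonneg (qe - me*t))]

lemma qsq_div_le (qe we η : ℝ) (hwe : 0 < we) (hη : 0 < η) :
    we * qe^2 / (|qe| + η) ≤ we * |qe| := by
  rw [div_le_iff₀ (by positivity)]
  calc we * qe^2 = we * (|qe| * |qe|) := by rw [← sq_abs]; ring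
    _ ≤ we * (|qe| * (|qe| + η)) := by
        refine mul_le_mul_of_nonneg_left ?_ hwe.le
        nlinarith [abs_nonneg qe]
    _ = we * |qe| * (|qe| + η) := by ring

lemma K_convex {n m : ℕ} (E : Matrix (Fin n) (Fin m) ℝ) (w : Fin m → ℝ) (hw : ∀ e, 0 < w e) :
    Convex ℝ {p : (Fin n → ℝ) × ℝ | ∃ q, E.mulVec q = p.1 ∧ (∑ e, w e * |q e|) ≤ p.2} := by
  rintro p1 ⟨s1, hs1, hFs1⟩ p2 ⟨s2, hs2, hFs2⟩ a c ha hc hac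
  refine ⟨a • s1 + c • s2, ?_, ?_⟩
  · rw [Matrix.mulVec_add, Matrix.mulVec_smul, Matrix.mulVec_smul, hs1, hs2]
    rfl
  · have hterm : ∀ e ∈ Finset.univ,
        w e * |(a • s1 + c • s2) e| ≤ a * (w e * |s1 e|) + c * (w e * |s2 e|) := by
      intro e _
      have h1 : |(a • s1 + c • s2) e| ≤ a * |s1 e| + c * |s2 e| := by
        simp only [Pi.add_apply, Pi.smul_apply, smul_eq_mul]
        calc |a * s1 e + c * s2 e| ≤ |a * s1 e| + |c * s2 e| := abs_add_le _ _
          _ = a * |s1 e| + c * |s2 e| := by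
              rw [abs_mul, abs_mul, abs_of_nonneg ha, abs_of_nonneg hc]
      have := mul_le_mul_of_nonneg_left h1 (hw e).le
      nlinarith [this]
    have hsnd : (a • p1 + c • p2).2 = a * p1.2 + c * p2.2 := by
      simp [smul_eq_mul]
    calc (∑ e, w e * |(a • s1 + c • s2) e|)
        ≤ ∑ e, (a * (w e * |s1 e|) + c * (w e * |s2 e|)) := Finset.sum_le_sum hterm
      _ = a * (∑ e, w e * |s1 e|) + c * (∑ e, w e * |s2 e|) := by
          rw [Finset.sum_add_distrib, Finset.mul_sum, Finset.mul_sum]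
      _ ≤ a * p1.2 + c * p2.2 :=
          add_le_add (mul_le_mul_of_nonneg_left hFs1 ha) (mul_le_mul_of_nonneg_left hFs2 hc)
      _ = (a • p1 + c • p2).2 := hsnd.symm

lemma K_closed {n m : ℕ} (hm : 0 < m) (E : Matrix (Fin n) (Fin m) ℝ)
    (w : Fin m → ℝ) (hw : ∀ e, 0 < w e) :
    IsClosed {p : (Fin n → ℝ) × ℝ | ∃ q, E.mulVec q = p.1 ∧ (∑ e, w e * |q e|) ≤ p.2} := by
  have hmne : Nonempty (Fin m) := Fin.pos_iff_nonempty.1 hm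
  refine IsSeqClosed.isClosed ?_
  intro x p hmem hlim
  choose q hq1 hq2 using hmem
  have hlim2 : Tendsto (fun k => (x k).2) atTop (nhds p.2) :=
    (continuous_snd.tendsto p).comp hlim
  obtain ⟨T, hT⟩ := hlim2.bddAbove_range
  have hT' : ∀ k, (x k).2 ≤ T := fun k => hT (Set.mem_range_self k)
  have hT0 : 0 ≤ T := by
    refine le_trans ?_ (hT' 0)
    refine le_trans ?_ (hq2 0)
    exact Finset.sum_nonneg fun e _ => mul_nonneg (hw e).le (abs_nonneg _)
  set wmin : ℝ := Finset.univ.inf' Finset.univ_nonempty w with hwmin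
  have hwmin0 : 0 < wmin := by
    rw [hwmin, Finset.lt_inf'_iff]
    exact fun i _ => hw i
  set R : ℝ := T / wmin with hR
  have hR0 : 0 ≤ R := div_nonneg hT0 hwmin0.le
  have hball : ∀ k, q k ∈ Metric.closedBall (0 : Fin m → ℝ) R := by
    intro k
    rw [mem_closedBall_zero_iff]
    rw [pi_norm_le_iff_of_nonneg hR0]
    intro e
    rw [Real.norm_eq_abs]
    have h1 : w e * |q k e| ≤ T := by
      refine le_trans ?_ ((hq2 k).trans (hT' k))
      exact Finset.single_le_sum (fun i _ => mul_nonneg (hw i).le (abs_nonneg _))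
        (Finset.mem_univ e)
    have h2 : |q k e| ≤ T / w e := by
      rw [le_div_iff₀ (hw e)]; linarith [h1]
    refine h2.trans ?_
    exact div_le_div_of_nonneg_left hT0 hwmin0 (Finset.inf'_le _ (Finset.mem_univ e))
  obtain ⟨ql, _, φ, hφ, hconv⟩ :=
    (isCompact_closedBall (0 : Fin m → ℝ) R).tendsto_subseq hball
  have hcontE : Continuous fun v : Fin m → ℝ => E.mulVec v := by
    have := (E.mulVecLin : (Fin m → ℝ) →ₗ[ℝ] (Fin n → ℝ)).continuous_of_finiteDimensional
    exact this
  have h1 : Tendsto (fun k => E.mulVec (q (φ k))) atTop (nhds (E.mulVec ql)) :=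
    (hcontE.tendsto ql).comp hconv
  have h2 : (fun k => E.mulVec (q (φ k))) = fun k => (x (φ k)).1 :=
    funext fun k => hq1 (φ k)
  have h3 : Tendsto (fun k => (x (φ k)).1) atTop (nhds p.1) :=
    ((continuous_fst.tendsto p).comp hlim).comp hφ.tendsto_atTop
  have hE : E.mulVec ql = p.1 := tendsto_nhds_unique (h2 ▸ h1) h3
  have hcontF : Continuous fun v : Fin m → ℝ => ∑ e, w e * |v e| := by
    refine continuous_finset_sum _ fun e _ => ?_
    exact continuous_const.mul ((continuous_apply e).abs)
  have h4 : Tendsto (fun k => ∑ e, w e * |q (φ k) e|) atTop (nhds (∑ e, w e * |ql e|)) :=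
    (hcontF.tendsto ql).comp hconv
  have h5 : Tendsto (fun k => (x (φ k)).2) atTop (nhds p.2) :=
    hlim2.comp hφ.tendsto_atTop
  have hFl : (∑ e, w e * |ql e|) ≤ p.2 :=
    le_of_tendsto_of_tendsto' h4 h5 fun k => hq2 (φ k)
  exact ⟨ql, hE, hFl⟩

set_option maxHeartbeats 1000000 in
/-- Equivalence with the conductivity minimization: if the Beckmann problem is feasible,
the infimum of `ℒ(μ) = ℰ(μ) + ½ wᵀμ` over the nonnegative orthant equals the supremum of
`bᵀu` over the dual feasible set `{u : |(G u)_e| ≤ 1 ∀ e}`. The Joule energy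
`ℰ(μ) = sup_u (bᵀu − ½ uᵀ L[μ] u)` takes values in `ℝ ∪ {+∞}`, modelled by `EReal`. -/
theorem conductivity_minimization_equiv {n m : ℕ} (hn : 0 < n) (hm : 0 < m)
    (E : Matrix (Fin n) (Fin m) ℝ) (w : Fin m → ℝ) (hw : ∀ e, 0 < w e)
    (b : Fin n → ℝ)
    (G : Matrix (Fin m) (Fin n) ℝ) (hG : G = (Matrix.diagonal w)⁻¹ * Eᵀ)
    (L : (Fin m → ℝ) → Matrix (Fin n) (Fin n) ℝ)
    (hL : ∀ μ, L μ = E * Matrix.diagonal μ * G)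
    (Ene : (Fin m → ℝ) → EReal)
    (hEne : ∀ μ, Ene μ =
      ⨆ u : Fin n → ℝ, ((b ⬝ᵥ u - (1/2) * (u ⬝ᵥ (L μ).mulVec u) : ℝ) : EReal))
    (hfeas : ∃ q₀ : Fin m → ℝ, E.mulVec q₀ = b) :
    (⨅ μ : {μ : Fin m → ℝ // ∀ e, 0 ≤ μ e},
        Ene μ.1 + (((1/2) * (w ⬝ᵥ μ.1) : ℝ) : EReal)) =
      ⨆ u : {u : Fin n → ℝ // ∀ e, |G.mulVec u e| ≤ 1}, ((b ⬝ᵥ u.1 : ℝ) : EReal) := by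
  obtain ⟨q₀, hq₀⟩ := hfeas
  have hmne : Nonempty (Fin m) := Fin.pos_iff_nonempty.1 hm
  set F : (Fin m → ℝ) → ℝ := fun q => ∑ e, w e * |q e| with hF
  have hQ : ∀ μ u, u ⬝ᵥ (L μ).mulVec u = ∑ e, μ e * (w e * (G.mulVec u e)^2) := by
    intro μ u; rw [hL]; exact quadform_eq E w hw G hG μ u
  have hPair : ∀ (u : Fin n → ℝ) (q : Fin m → ℝ),
      u ⬝ᵥ E.mulVec q = ∑ e, q e * (w e * G.mulVec u e) := pairing_eq E w hw G hG
  set S := (⨆ u : {u : Fin n → ℝ // ∀ e, |G.mulVec u e| ≤ 1}, ((b ⬝ᵥ u.1 : ℝ) : EReal))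
    with hS
  set I := (⨅ μ : {μ : Fin m → ℝ // ∀ e, 0 ≤ μ e},
      Ene μ.1 + (((1/2) * (w ⬝ᵥ μ.1) : ℝ) : EReal)) with hI
  have easy : S ≤ I := by
    refine iSup_le fun u => le_iInf fun μ => ?_
    have h1 : ((b ⬝ᵥ u.1 - (1/2) * (u.1 ⬝ᵥ (L μ.1).mulVec u.1) : ℝ) : EReal) ≤ Ene μ.1 := by
      rw [hEne]; exact le_iSup (fun v : Fin n → ℝ =>
        ((b ⬝ᵥ v - (1/2) * (v ⬝ᵥ (L μ.1).mulVec v) : ℝ) : EReal)) u.1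
    have hreal : (b ⬝ᵥ u.1 : ℝ) ≤
        (b ⬝ᵥ u.1 - (1/2) * (u.1 ⬝ᵥ (L μ.1).mulVec u.1)) + (1/2) * (w ⬝ᵥ μ.1) := by
      have hq := hQ μ.1 u.1
      have hsum : ∑ e, μ.1 e * (w e * (G.mulVec u.1 e)^2) ≤ w ⬝ᵥ μ.1 := by
        rw [dotProduct]
        refine Finset.sum_le_sum fun e _ => ?_
        have h2 : (G.mulVec u.1 e)^2 ≤ 1 := by
          have := u.2 e
          nlinarith [abs_nonneg (G.mulVec u.1 e), sq_abs (G.mulVec u.1 e)]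
        have h3 := mul_le_mul_of_nonneg_left h2 (mul_nonneg (μ.2 e) (hw e).le)
        nlinarith [h3]
      rw [hq]; linarith
    calc ((b ⬝ᵥ u.1 : ℝ) : EReal)
        ≤ (((b ⬝ᵥ u.1 - (1/2) * (u.1 ⬝ᵥ (L μ.1).mulVec u.1)) + (1/2) * (w ⬝ᵥ μ.1) : ℝ) : EReal) := by
          exact_mod_cast hreal
      _ = ((b ⬝ᵥ u.1 - (1/2) * (u.1 ⬝ᵥ (L μ.1).mulVec u.1) : ℝ) : EReal)
            + (((1/2) * (w ⬝ᵥ μ.1) : ℝ) : EReal) := by rw [EReal.coe_add]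
      _ ≤ Ene μ.1 + (((1/2) * (w ⬝ᵥ μ.1) : ℝ) : EReal) := by
          exact add_le_add_left h1 _
  have B1 : ∀ q : Fin m → ℝ, E.mulVec q = b → I ≤ ((F q : ℝ) : EReal) := by
    intro q hq
    apply ereal_le_of_forall_pos
    intro δ hδ
    set W : ℝ := ∑ e, w e with hW
    have hWpos : 0 < W := Finset.sum_pos (fun e _ => hw e) Finset.univ_nonempty
    set η : ℝ := δ / W with hη
    have hηpos : 0 < η := div_pos hδ hWpos
    set μ : Fin m → ℝ := fun e => |q e| + η with hμ
    have hμpos : ∀ e, 0 < μ e := fun e => add_pos_of_nonneg_of_pos (abs_nonneg _) hηpos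
    set r : ℝ := (1/2) * ∑ e, w e * (q e)^2 / μ e with hr
    have hEbound : Ene μ ≤ ((r : ℝ) : EReal) := by
      rw [hEne]
      refine iSup_le fun u => ?_
      rw [EReal.coe_le_coe_iff]
      have hb : b ⬝ᵥ u = ∑ e, q e * (w e * G.mulVec u e) := by
        rw [← hq, dotProduct_comm]; exact hPair u q
      rw [hb, hQ, hr]
      have hterm : ∀ e ∈ Finset.univ,
          q e * (w e * G.mulVec u e) - (1/2) * (μ e * (w e * (G.mulVec u e)^2))
            ≤ (1/2) * (w e * (q e)^2 / μ e) := by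
        intro e _
        exact young_term (q e) (w e) (μ e) (G.mulVec u e) (hw e) (hμpos e)
      calc (∑ e, q e * (w e * G.mulVec u e)) - 1/2 * ∑ e, μ e * (w e * (G.mulVec u e)^2)
          = ∑ e, (q e * (w e * G.mulVec u e) - (1/2) * (μ e * (w e * (G.mulVec u e)^2))) := by
            rw [Finset.sum_sub_distrib, Finset.mul_sum]
        _ ≤ ∑ e, (1/2) * (w e * (q e)^2 / μ e) := Finset.sum_le_sum hterm
        _ = (1/2) * ∑ e, w e * (q e)^2 / μ e := by rw [Finset.mul_sum]
    have hIle : I ≤ ((r + (1/2) * (w ⬝ᵥ μ) : ℝ) : EReal) := by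
      refine (iInf_le _ ⟨μ, fun e => (hμpos e).le⟩).trans ?_
      rw [EReal.coe_add]
      exact add_le_add_left hEbound _
    refine hIle.trans ?_
    rw [EReal.coe_le_coe_iff]
    have hrle : r ≤ (1/2) * F q := by
      rw [hr, hF]
      have : ∀ e ∈ Finset.univ, w e * (q e)^2 / μ e ≤ w e * |q e| := by
        intro e _
        exact qsq_div_le (q e) (w e) η (hw e) hηpos
      have := Finset.sum_le_sum this
      linarith
    have hdot : w ⬝ᵥ μ = F q + η * W := by
      rw [dotProduct, hF, hW, hμ]
      rw [Finset.mul_sum, ← Finset.sum_add_distrib]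
      refine Finset.sum_congr rfl fun e _ => ?_
      ring
    have hηW : η * W = δ := div_mul_cancel₀ δ hWpos.ne'
    rw [hdot, hηW]
    linarith
  have hard : I ≤ S := by
    by_contra hcon
    push_neg at hcon
    obtain ⟨s', hs'1, hs'2⟩ := EReal.exists_between_coe_real hcon
    set K : Set ((Fin n → ℝ) × ℝ) :=
      {p | ∃ q, E.mulVec q = p.1 ∧ (∑ e, w e * |q e|) ≤ p.2} with hK
    have hxK : ((b, s') : (Fin n → ℝ) × ℝ) ∉ K := by
      rintro ⟨qq, hqq1, hqq2⟩
      have h1 := (B1 qq hqq1).trans (EReal.coe_le_coe_iff.2 hqq2)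
      exact absurd (lt_of_le_of_lt h1 hs'2) (lt_irrefl I)
    obtain ⟨f, r, hfr, hrx⟩ := geometric_hahn_banach_closed_point
      (K_convex E w hw) (K_closed hm E w hw) hxK
    set c := f ((0 : Fin n → ℝ), (1:ℝ)) with hc0
    have hdecomp : ∀ (y : Fin n → ℝ) (t : ℝ), f (y, t) = f (y, 0) + t * c := by
      intro y t
      have h0 : ((y, t) : (Fin n → ℝ) × ℝ) = (y, 0) + t • ((0:Fin n → ℝ), (1:ℝ)) := by
        simp [Prod.ext_iff]
      rw [h0, map_add, f.map_smul, smul_eq_mul]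
    have hmemK : ∀ (qq : Fin m → ℝ) (t : ℝ), F qq ≤ t →
        ((E.mulVec qq, t) : (Fin n → ℝ) × ℝ) ∈ K := fun qq t ht => ⟨qq, rfl, ht⟩
    have hF0 : F (0 : Fin m → ℝ) = 0 := by simp [hF]
    have hFnn : ∀ qq, 0 ≤ F qq :=
      fun qq => Finset.sum_nonneg fun e _ => mul_nonneg (hw e).le (abs_nonneg _)
    have hcneg : c < 0 := by
      rcases lt_trichotomy c 0 with h | h | h
      · exact h
      · exfalso
        have hm1 : ((b, max s' (F q₀)) : (Fin n → ℝ) × ℝ) ∈ K :=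
          ⟨q₀, hq₀, le_max_right _ _⟩
        have e1 := hfr _ hm1
        have e2 : f (b, max s' (F q₀)) = f (b, s') := by
          rw [hdecomp b (max s' (F q₀)), hdecomp b s', h]; ring
        rw [e2] at e1
        linarith [hrx]
      · exfalso
        set A0 := f ((E.mulVec q₀ : Fin n → ℝ), (0:ℝ)) with hA0
        set k := (|r - A0 - F q₀ * c| + 1) / c with hk
        have hkpos : 0 < k := div_pos (by positivity) h
        have e1 := hfr _ (hmemK q₀ (F q₀ + k) (by linarith))
        rw [hdecomp] at e1
        have e2 : k * c = |r - A0 - F q₀ * c| + 1 := div_mul_cancel₀ _ h.ne'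
        have e3 : r - A0 - F q₀ * c ≤ |r - A0 - F q₀ * c| := le_abs_self _
        nlinarith [e1, e2, e3]
    have hcne : (-c) ≠ 0 := by linarith
    have hcpos : (0:ℝ) < -c := by linarith
    set ustar : Fin n → ℝ := fun i => f (Pi.single i 1, 0) / (-c) with hustar
    have hclin : ∀ y : Fin n → ℝ, f (y, 0) = (-c) * (y ⬝ᵥ ustar) := by
      intro y
      have hy : ((y, (0:ℝ)) : (Fin n → ℝ) × ℝ)
          = ∑ i, y i • ((Pi.single i 1 : Fin n → ℝ), (0:ℝ)) := by
        rw [Prod.ext_iff]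
        constructor
        · rw [Prod.fst_sum]
          funext j
          simp [Finset.sum_apply, Pi.single_apply, mul_ite]
        · rw [Prod.snd_sum]
          simp
      rw [hy, map_sum]
      have : ∀ i ∈ Finset.univ,
          f (y i • ((Pi.single i 1 : Fin n → ℝ), (0:ℝ))) = (-c) * (y i * ustar i) := by
        intro i _
        rw [f.map_smul, smul_eq_mul, hustar]
        field_simp [hcneg.ne]
      rw [Finset.sum_congr rfl this, ← Finset.mul_sum]
      rfl
    have hrpos : 0 < r := by
      have h1 := hfr _ (hmemK 0 0 (le_of_eq hF0))
      rw [Matrix.mulVec_zero, hdecomp] at h1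
      have h00 : f ((0:Fin n → ℝ), (0:ℝ)) = 0 := map_zero f
      rw [h00] at h1
      linarith
    set r' := r / (-c) with hr'
    have hr'pos : 0 < r' := div_pos hrpos hcpos
    have hbound : ∀ qq : Fin m → ℝ,
        (∑ e, qq e * (w e * G.mulVec ustar e)) - F qq < r' := by
      intro qq
      have e1 := hfr _ (hmemK qq (F qq) le_rfl)
      rw [hdecomp, hclin] at e1
      have e2 : (E.mulVec qq) ⬝ᵥ ustar = ∑ e, qq e * (w e * G.mulVec ustar e) := by
        rw [dotProduct_comm]; exact hPair ustar qq
      rw [e2] at e1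
      rw [hr', lt_div_iff₀ hcpos]
      nlinarith [e1]
    have hfeas' : ∀ e, |G.mulVec ustar e| ≤ 1 := by
      intro e
      by_contra hgt
      push_neg at hgt
      set g := G.mulVec ustar e with hg
      have hgne : g ≠ 0 := by
        intro h0
        rw [h0] at hgt
        simp at hgt
        linarith
      set k := (r' + 1) / (w e * (|g| - 1)) with hk2
      have hkpos : 0 < k := div_pos (by linarith) (by nlinarith [hw e])
      have hkprod : k * (w e * (|g| - 1)) = r' + 1 :=
        div_mul_cancel₀ _ (by nlinarith [hw e])
      have hsum : ∀ c₀ : ℝ,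
          (∑ e', (Pi.single e c₀ : Fin m → ℝ) e' * (w e' * G.mulVec ustar e')) = c₀ * (w e * g) := by
        intro c₀
        rw [Finset.sum_eq_single e]
        · rw [Pi.single_eq_same, hg]
        · intro b2 _ hb2
          rw [Pi.single_eq_of_ne hb2, zero_mul]
        · intro h; exact absurd (Finset.mem_univ e) h
      have hFsingle : ∀ c₀ : ℝ, F (Pi.single e c₀) = w e * |c₀| := by
        intro c₀
        simp only [hF]
        rw [Finset.sum_eq_single e]
        · rw [Pi.single_eq_same]
        · intro b2 _ hb2
          rw [Pi.single_eq_of_ne hb2, abs_zero, mul_zero]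
        · intro h; exact absurd (Finset.mem_univ e) h
      rcases lt_or_gt_of_ne hgne with hneg | hpos
      · have h1 := hbound (Pi.single e (-k))
        rw [hsum, hFsingle] at h1
        rw [abs_of_neg hneg] at hkprod
        rw [abs_neg, abs_of_pos hkpos] at h1
        nlinarith [h1, hkprod]
      · have h1 := hbound (Pi.single e k)
        rw [hsum, hFsingle] at h1
        rw [abs_of_pos hpos] at hkprod
        rw [abs_of_pos hkpos] at h1
        nlinarith [h1, hkprod]
    have hub : ((b ⬝ᵥ ustar : ℝ) : EReal) ≤ S := by
      rw [hS]
      exact le_iSup (fun u : {u : Fin n → ℝ // ∀ e, |G.mulVec u e| ≤ 1} =>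
        ((b ⬝ᵥ u.1 : ℝ) : EReal)) ⟨ustar, hfeas'⟩
    have hlt : b ⬝ᵥ ustar < s' := by
      have h1 := lt_of_le_of_lt hub hs'1
      exact_mod_cast h1
    have e3 : f (b, s') = (-c) * (b ⬝ᵥ ustar) + s' * c := by rw [hdecomp, hclin]
    rw [e3] at hrx
    nlinarith [hrx, hrpos, hlt, mul_pos hcpos (by linarith : (0:ℝ) < s' - b ⬝ᵥ ustar)]
  exact le_antisymm hard easy
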